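/- Let A, B, C be real matrices with C invertible (C m×m, A m×m), and suppose the stacked matrix [C; A] admits a factorization [C; A] = L·[R; 0] where L = [[L11,L12],[L21,L22]] is orthogonal (L11 m×m) and R is invertible. Then L11 and L22 are invertible and A C^{-1} = L21 L11^{-1}. -/

import Mathlib

open Matrix

theorem stmt_11 {m : ℕ}
    (A C : Matrix (Fin m) (Fin m) ℝ)
    (L11 L12 L21 L22 R : Matrix (Fin m) (Fin m) ℝ)
    (hC : IsUnit C.det)
    (horth : (fromBlocks L11 L12 L21 L22)ᵀ * fromBlocks L11 L12 L21 L22 = 1)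
    (hR : IsUnit R.det)
    (hfact : fromRows C A = fromBlocks L11 L12 L21 L22 * fromRows R 0) :
    IsUnit L11.det ∧ IsUnit L22.det ∧ A * C⁻¹ = L21 * L11⁻¹ := by
  replace hfact : fromRows C A = @HMul.hMul _ _ _ Matrix.instHMulOfFintypeOfMulOfAddCommMonoid
      (fromBlocks L11 L12 L21 L22) (fromRows R 0) := hfact
  rw [fromBlocks_mul_fromRows] at hfact
  simp only [Matrix.mul_zero, add_zero, fromRows_inj.eq_iff] at hfact
  obtain ⟨hCeq, hAeq⟩ := hfact
  have hL11 : IsUnit L11.det := by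
    have : C.det = L11.det * R.det := by rw [hCeq, det_mul]
    rw [this] at hC
    exact (IsUnit.mul_iff.mp hC).1
  -- L * Lᵀ = 1
  have horth' : fromBlocks L11 L12 L21 L22 * (fromBlocks L11 L12 L21 L22)ᵀ = 1 :=
    mul_eq_one_comm.mp horth
  rw [fromBlocks_transpose, fromBlocks_multiply, ← fromBlocks_one] at horth'
  rw [fromBlocks_inj] at horth'
  obtain ⟨h11, -, h21, h22⟩ := horth'
  have hL11T : IsUnit L11ᵀ.det := by rwa [det_transpose]
  have key : L22 * (L22ᵀ - L12ᵀ * (L11ᵀ)⁻¹ * L21ᵀ) = 1 := by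
    have hneg : L22 * L12ᵀ = -(L21 * L11ᵀ) := eq_neg_of_add_eq_zero_right h21
    calc L22 * (L22ᵀ - L12ᵀ * (L11ᵀ)⁻¹ * L21ᵀ)
        = L22 * L22ᵀ - (L22 * L12ᵀ) * ((L11ᵀ)⁻¹ * L21ᵀ) := by noncomm_ring
      _ = L22 * L22ᵀ + L21 * (L11ᵀ * (L11ᵀ)⁻¹) * L21ᵀ := by rw [hneg]; noncomm_ring
      _ = 1 := by rw [mul_nonsing_inv _ hL11T, Matrix.mul_one, add_comm]; exact h22
  have hL22 : IsUnit L22.det := by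
    have := congrArg Matrix.det key
    rw [det_mul, det_one] at this
    exact IsUnit.of_mul_eq_one _ this
  refine ⟨hL11, hL22, ?_⟩
  rw [hCeq, hAeq, Matrix.mul_inv_rev, ← Matrix.mul_assoc, Matrix.mul_assoc L21,
    mul_nonsing_inv _ hR, Matrix.mul_one]
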